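/- Let $B\subset\mathbb{R}^2$ be an open ball of radius $R$ and let $N:B\to\mathcal{S}^1$ be a continuous unit vector field such that for all $x,y\in B$: if the lines $[x;N(x)]$ and $[y;N(y)]$ intersect within the ball $2B$ of twice the radius (same center), then $[x;N(x)]=[y;N(y)]$. Then $N$ is Lipschitz continuous with $\mathrm{Lip}(N)\le 1/R$. -/

import Mathlib

open Metric

lemma stmt7_aux (O : EuclideanSpace ℝ (Fin 2)) (R : ℝ) (hR : 0 < R)
    (N : EuclideanSpace ℝ (Fin 2) → EuclideanSpace ℝ (Fin 2))
    (hunit : ∀ x ∈ ball O R, ‖N x‖ = 1)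
    (hline : ∀ x ∈ ball O R, ∀ y ∈ ball O R,
      (∃ p ∈ ball O (2 * R), (∃ s : ℝ, p = x + s • N x) ∧ (∃ s : ℝ, p = y + s • N y)) →
      { p | ∃ s : ℝ, p = x + s • N x } = { p | ∃ s : ℝ, p = y + s • N y })
    (x : EuclideanSpace ℝ (Fin 2)) (hx : x ∈ ball O R)
    (y : EuclideanSpace ℝ (Fin 2)) (hy : y ∈ ball O R) :
    ‖N x - N y‖ ≤ ‖x - y‖ / R ∨ ‖N x + N y‖ ≤ ‖x - y‖ / R := by
  have h1 : ‖N x‖ = 1 := hunit x hx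
  have h2 : ‖N y‖ = 1 := hunit y hy
  have hxyR : (0:ℝ) ≤ ‖x - y‖ / R := div_nonneg (norm_nonneg _) hR.le
  by_cases hdep : ∃ c : ℝ, c • N x = N y
  · obtain ⟨c, hc⟩ := hdep
    have habs : |c| = 1 := by
      have := congrArg norm hc
      rw [norm_smul, Real.norm_eq_abs, h1, h2, mul_one] at this
      exact this
    rcases (abs_eq (by norm_num : (0:ℝ) ≤ 1)).mp habs with h | h
    · left; rw [← hc, h, one_smul, sub_self, norm_zero]; exact hxyR
    · right; rw [← hc, h]; simpa using hxyR
  · have hNx0 : N x ≠ 0 := by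
      intro h; rw [h, norm_zero] at h1; norm_num at h1
    have hli : LinearIndependent ℝ ![N x, N y] :=
      (LinearIndependent.pair_iff' hNx0).mpr (fun a ha => hdep ⟨a, ha⟩)
    obtain ⟨s, t, hst⟩ : ∃ s t : ℝ, y - x = s • N x + t • N y := by
      have hcard : Fintype.card (Fin 2) = Module.finrank ℝ (EuclideanSpace ℝ (Fin 2)) := by
        simp
      let b := basisOfLinearIndependentOfCardEqFinrank hli hcard
      have hb : ⇑b = ![N x, N y] := coe_basisOfLinearIndependentOfCardEqFinrank hli hcard
      refine ⟨b.repr (y - x) 0, b.repr (y - x) 1, ?_⟩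
      have hsum := b.sum_repr (y - x)
      rw [Fin.sum_univ_two, hb] at hsum
      simpa using hsum.symm
    set p : EuclideanSpace ℝ (Fin 2) := x + s • N x with hp
    have hp2 : p = y + (-t) • N y := by
      rw [hp]
      linear_combination (norm := module) -hst
    -- the intersection point is not in the double ball
    have hpfar : 2 * R ≤ dist p O := by
      by_contra hlt
      push_neg at hlt
      have hpmem : p ∈ ball O (2 * R) := mem_ball.mpr hlt
      have heq := hline x hx y hy ⟨p, hpmem, ⟨s, hp⟩, ⟨-t, hp2⟩⟩
      have hy1 : y ∈ { q | ∃ s : ℝ, q = x + s • N x } := by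
        rw [heq]; exact ⟨0, by simp⟩
      have hy2 : y + N y ∈ { q | ∃ s : ℝ, q = x + s • N x } := by
        rw [heq]; exact ⟨1, by simp⟩
      obtain ⟨s₀, hs₀⟩ := hy1
      obtain ⟨s₁, hs₁⟩ := hy2
      refine hdep ⟨s₁ - s₀, ?_⟩
      have : (y + N y) - y = (x + s₁ • N x) - (x + s₀ • N x) := by rw [← hs₀, ← hs₁]
      rw [sub_smul]
      linear_combination (norm := module) this.symm
    -- distance estimates
    have hdx : dist x O < R := mem_ball.mp hx
    have hdy : dist y O < R := mem_ball.mp hy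
    have hs : R < |s| := by
      have h3 : dist p O ≤ dist p x + dist x O := dist_triangle p x O
      have h4 : dist p x = |s| := by
        rw [dist_eq_norm, hp]
        simp [norm_smul, h1]
      linarith
    have ht : R < |t| := by
      have h3 : dist p O ≤ dist p y + dist y O := dist_triangle p y O
      have h4 : dist p y = |t| := by
        rw [dist_eq_norm, hp2]
        simp [norm_smul, h2]
      linarith
    set c : ℝ := inner ℝ (N x) (N y) with hc
    have hcabs : |c| ≤ 1 := by
      have := abs_real_inner_le_norm (N x) (N y)
      rwa [h1, h2, mul_one] at this
    have hnorm2 : ‖x - y‖ ^ 2 = s ^ 2 + t ^ 2 + 2 * (s * t) * c := by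
      have hxy : x - y = -(s • N x + t • N y) := by
        linear_combination (norm := module) -hst
      rw [hxy, norm_neg, norm_add_sq_real, norm_smul, norm_smul,
        real_inner_smul_left, real_inner_smul_right, Real.norm_eq_abs,
        Real.norm_eq_abs, h1, h2, ← hc]
      rw [mul_pow, mul_pow]
      ring_nf
      rw [sq_abs, sq_abs]
      ring
    have hkey : R ^ 2 * (2 - 2 * |c|) ≤ ‖x - y‖ ^ 2 := by
      rw [hnorm2]
      have habsst : s * t * c ≥ -(|s| * |t| * |c|) := by
        have := neg_abs_le (s * t * c)
        rw [abs_mul, abs_mul] at this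
        linarith
      have hprod : (0:ℝ) ≤ (|s| * |t| - R ^ 2) * (1 - |c|) := by
        apply mul_nonneg
        · nlinarith
        · linarith
      nlinarith [sq_abs s, sq_abs t, sq_nonneg (|s| - |t|)]
    have hfin : ∀ v : EuclideanSpace ℝ (Fin 2), ‖v‖ ^ 2 ≤ ‖x - y‖ ^ 2 / R ^ 2 →
        ‖v‖ ≤ ‖x - y‖ / R := by
      intro v hv
      rw [← div_pow] at hv
      exact (pow_le_pow_iff_left₀ (norm_nonneg v) hxyR (by norm_num)).mp hv
    rcases le_or_gt 0 c with hc0 | hc0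
    · left
      refine hfin _ ?_
      rw [norm_sub_sq_real, h1, h2, ← hc]
      rw [le_div_iff₀ (by positivity)]
      rw [abs_of_nonneg hc0] at hkey
      nlinarith
    · right
      refine hfin _ ?_
      rw [norm_add_sq_real, h1, h2, ← hc]
      rw [le_div_iff₀ (by positivity)]
      rw [abs_of_neg hc0] at hkey
      nlinarith

theorem stmt7_lip (O : EuclideanSpace ℝ (Fin 2)) (R : ℝ) (hR : 0 < R)
    (N : EuclideanSpace ℝ (Fin 2) → EuclideanSpace ℝ (Fin 2))
    (hcont : ContinuousOn N (ball O R))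
    (hunit : ∀ x ∈ ball O R, ‖N x‖ = 1)
    (haux : ∀ x ∈ ball O R, ∀ y ∈ ball O R,
      ‖N x - N y‖ ≤ ‖x - y‖ / R ∨ ‖N x + N y‖ ≤ ‖x - y‖ / R) :
    ∀ x ∈ ball O R, ∀ y ∈ ball O R, ‖N x - N y‖ ≤ (1 / R) * ‖x - y‖ := by
  intro x hx y hy
  rcases eq_or_ne x y with rfl | hne
  · simp
  have hxy0 : 0 < ‖x - y‖ := by
    rw [norm_pos_iff]; exact sub_ne_zero_of_ne hne
  set L : ℝ := ‖x - y‖ / R with hLdef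
  have hL0 : 0 < L := div_pos hxy0 hR
  set γ : ℝ → EuclideanSpace ℝ (Fin 2) := fun u => x + u • (y - x) with hγ
  have hmem : ∀ u ∈ Set.Icc (0:ℝ) 1, γ u ∈ ball O R := by
    intro u hu
    have h := (convex_ball O R) hx hy (by linarith [hu.2] : (0:ℝ) ≤ 1 - u) hu.1
      (by ring)
    have : γ u = (1 - u) • x + u • y := by
      simp only [hγ]
      module
    rw [this]; exact h
  have hγcont : Continuous γ := by
    simp only [hγ]; fun_prop
  have hgcont : ContinuousOn (fun u => N (γ u)) (Set.Icc (0:ℝ) 1) :=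
    hcont.comp hγcont.continuousOn (fun u hu => hmem u hu)
  have hUC := isCompact_Icc.uniformContinuousOn_of_continuous hgcont
  rw [Metric.uniformContinuousOn_iff] at hUC
  obtain ⟨δ, hδ0, hδ⟩ := hUC 1 one_pos
  obtain ⟨n, hn⟩ := exists_nat_gt (max (1/δ) L)
  have hn1 : (1:ℝ)/δ < n := lt_of_le_of_lt (le_max_left _ _) hn
  have hnL : L < n := lt_of_le_of_lt (le_max_right _ _) hn
  have hn0 : (0:ℝ) < n := lt_trans (by positivity) hn1
  -- local bound
  have key : ∀ u ∈ Set.Icc (0:ℝ) 1, ∀ v ∈ Set.Icc (0:ℝ) 1, |u - v| ≤ 1/n →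
      ‖N (γ u) - N (γ v)‖ ≤ L / n := by
    intro u hu v hv huv
    have hdist : ‖γ u - γ v‖ = |u - v| * ‖x - y‖ := by
      have h : γ u - γ v = (u - v) • (y - x) := by
        simp only [hγ]; module
      rw [h, norm_smul, Real.norm_eq_abs, norm_sub_rev]
    have hratio : ‖γ u - γ v‖ / R ≤ L / n := by
      rw [hdist, hLdef]
      calc |u - v| * ‖x - y‖ / R ≤ (1/n) * ‖x - y‖ / R := by gcongr
        _ = ‖x - y‖ / R / n := by ring
    have hLn1 : L / n < 1 := by
      rw [div_lt_one hn0]; exact hnL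
    have hclose : ‖N (γ u) - N (γ v)‖ < 1 := by
      have hd : dist u v < δ := by
        rw [Real.dist_eq]
        calc |u - v| ≤ 1/n := huv
          _ < δ := by
            rw [div_lt_iff₀ hn0]
            rw [div_lt_iff₀ hδ0] at hn1
            linarith
      have := hδ u hu v hv hd
      rwa [dist_eq_norm] at this
    rcases haux (γ u) (hmem u hu) (γ v) (hmem v hv) with h | h
    · exact le_trans h hratio
    · exfalso
      have hsum : 1 < ‖N (γ u) + N (γ v)‖ := by
        have heq : N (γ u) + N (γ v) = (N (γ u) + N (γ u)) - (N (γ u) - N (γ v)) := by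
          abel
        have h2 : ‖N (γ u) + N (γ u)‖ = 2 := by
          have : N (γ u) + N (γ u) = (2:ℝ) • N (γ u) := by module
          rw [this, norm_smul, hunit _ (hmem u hu)]
          norm_num
        have := norm_sub_norm_le (N (γ u) + N (γ u)) (N (γ u) - N (γ v))
        rw [← heq, h2] at this
        linarith
      have : ‖N (γ u) + N (γ v)‖ ≤ L / n := le_trans h hratio
      linarith
  -- telescoping
  have hne0 : (n:ℝ) ≠ 0 := ne_of_gt hn0
  have htel : N y - N x = ∑ i ∈ Finset.range n, (N (γ ((i+1:ℕ)/n)) - N (γ (i/n))) := by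
    rw [Finset.sum_range_sub (fun i => N (γ (i/n)))]
    have e1 : ((n:ℝ))/n = 1 := div_self hne0
    have e2 : γ 1 = y := by simp only [hγ, one_smul]; module
    have e3 : γ 0 = x := by simp only [hγ, zero_smul]; module
    rw [show ((n:ℕ):ℝ)/(n:ℝ) = (1:ℝ) from e1, e2]
    norm_num [e3]
  have hbound : ‖N y - N x‖ ≤ L := by
    rw [htel]
    calc ‖∑ i ∈ Finset.range n, (N (γ ((i+1:ℕ)/n)) - N (γ (i/n)))‖
        ≤ ∑ i ∈ Finset.range n, ‖N (γ ((i+1:ℕ)/n)) - N (γ (i/n))‖ := norm_sum_le _ _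
      _ ≤ ∑ i ∈ Finset.range n, L / n := by
          apply Finset.sum_le_sum
          intro i hi
          have hi' : (i:ℝ) < n := by exact_mod_cast Finset.mem_range.mp hi
          have hi1 : ((i:ℝ) + 1) ≤ n := by
            have : ((i:ℝ) + 1) ≤ (n:ℕ) := by exact_mod_cast Finset.mem_range.mp hi
            exact_mod_cast this
          apply key
          · refine ⟨by positivity, ?_⟩
            rw [div_le_one hn0]; push_cast; exact hi1
          · refine ⟨by positivity, ?_⟩
            rw [div_le_one hn0]; linarith
          · push_cast
            rw [div_sub_div_same]
            have h1 : (i:ℝ) + 1 - i = 1 := by ring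
            rw [h1, abs_of_nonneg (by positivity)]
      _ = L := by
          rw [Finset.sum_const, Finset.card_range, nsmul_eq_mul]
          field_simp
  rw [norm_sub_rev] at hbound
  rw [hLdef] at hbound
  calc ‖N x - N y‖ ≤ ‖x - y‖ / R := hbound
    _ = (1/R) * ‖x - y‖ := by ring


/-- If a continuous unit vector field `N` on an open ball `B = B(O,R)` in the plane
has the property that any two of its lines `[x;N(x)]` that meet inside the
concentric ball of radius `2R` coincide, then `N` is Lipschitz with constant `1/R`. -/
theorem stmt7 (O : EuclideanSpace ℝ (Fin 2)) (R : ℝ) (hR : 0 < R)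
    (N : EuclideanSpace ℝ (Fin 2) → EuclideanSpace ℝ (Fin 2))
    (hcont : ContinuousOn N (ball O R))
    (hunit : ∀ x ∈ ball O R, ‖N x‖ = 1)
    (hline : ∀ x ∈ ball O R, ∀ y ∈ ball O R,
      (∃ p ∈ ball O (2 * R), (∃ s : ℝ, p = x + s • N x) ∧ (∃ s : ℝ, p = y + s • N y)) →
      { p | ∃ s : ℝ, p = x + s • N x } = { p | ∃ s : ℝ, p = y + s • N y }) :
    ∀ x ∈ ball O R, ∀ y ∈ ball O R, ‖N x - N y‖ ≤ (1 / R) * ‖x - y‖ := by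
  exact stmt7_lip O R hR N hcont hunit (stmt7_aux O R hR N hunit hline)
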